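/- Let X be a Hausdorff topological space, Φ a global semiflow on X, and 𝒜 an attractor of Φ. Then the region of attraction Ω(𝒜) is an open subset of X, and 𝒜 attracts every compact subset of Ω(𝒜). -/

import Mathlib

open scoped NNReal

/-- `A` attracts `B` under the semiflow `Φ`: for every open `V ⊇ A` there is `T` such that
`Φ(t, b) ∈ V` for all `t > T` and `b ∈ B`. -/
def Attracts {X : Type*} [TopologicalSpace X] (Φ : ℝ≥0 × X → X) (A B : Set X) : Prop :=
  ∀ V : Set X, IsOpen V → A ⊆ V → ∃ T : ℝ≥0, ∀ t : ℝ≥0, T < t → ∀ b ∈ B, Φ (t, b) ∈ V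

/-- `A` is invariant under the semiflow `Φ`: `Φ(t, ·)` maps `A` onto `A` for every `t ≥ 0`. -/
def IsInvariantSet {X : Type*} (Φ : ℝ≥0 × X → X) (A : Set X) : Prop :=
  ∀ t : ℝ≥0, (fun x => Φ (t, x)) '' A = A

/-- `A` is an attractor of the semiflow `Φ`: a nonempty, sequentially compact, invariant set
attracting a neighbourhood `U` of its closure, and maximal among sequentially compact
invariant subsets of `U`. -/
def IsAttractor {X : Type*} [TopologicalSpace X] (Φ : ℝ≥0 × X → X) (A : Set X) : Prop :=
  A.Nonempty ∧ IsSeqCompact A ∧ IsInvariantSet Φ A ∧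
    ∃ U : Set X, closure A ⊆ interior U ∧ Attracts Φ A U ∧
      ∀ S : Set X, S ⊆ U → IsSeqCompact S → IsInvariantSet Φ S → S ⊆ A

/-- The region of attraction `Ω(A)` of `A`: all points attracted by `A`. -/
def attractionRegion {X : Type*} [TopologicalSpace X] (Φ : ℝ≥0 × X → X) (A : Set X) :
    Set X :=
  {x | Attracts Φ A {x}}

/-- the region of attraction of an attractor is open, and the attractor
attracts every compact subset of its region of attraction. -/
theorem attractionRegion_isOpen_and_attracts_compact {X : Type*} [TopologicalSpace X]
    [T2Space X]
    (Φ : ℝ≥0 × X → X) (hcont : Continuous Φ)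
    (h0 : ∀ x : X, Φ (0, x) = x)
    (hadd : ∀ (t s : ℝ≥0) (x : X), Φ (t + s, x) = Φ (t, Φ (s, x)))
    (A : Set X) (hA : IsAttractor Φ A) :
    IsOpen (attractionRegion Φ A) ∧
    ∀ B : Set X, B ⊆ attractionRegion Φ A → IsCompact B → Attracts Φ A B := by

  classical
  obtain ⟨hne, hseq, hinv, U, hU, hAtt, hmax⟩ := hA
  have hAU : A ⊆ interior U := subset_trans subset_closure hU
  -- key: points of the region of attraction enter `interior U` uniformly on a neighbourhood
  have key : ∀ x ∈ attractionRegion Φ A, ∃ (t₀ : ℝ≥0) (W : Set X),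
      IsOpen W ∧ x ∈ W ∧ ∀ w ∈ W, Φ (t₀, w) ∈ U := by
    intro x hx
    obtain ⟨T, hT⟩ := hx (interior U) isOpen_interior hAU
    have hmem : Φ (T + 1, x) ∈ interior U := hT (T + 1) (by simp) x rfl
    have hc : Continuous fun w => Φ (T + 1, w) :=
      hcont.comp (continuous_const.prodMk continuous_id)
    exact ⟨T + 1, (fun w => Φ (T + 1, w)) ⁻¹' interior U,
      hc.isOpen_preimage _ isOpen_interior, hmem, fun w hw => interior_subset hw⟩
  -- if every point of `B` enters `U` by a uniformly bounded time, then `A` attracts `B`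
  have enter : ∀ (B : Set X) (tm : ℝ≥0), (∀ b ∈ B, ∃ t₀ ≤ tm, Φ (t₀, b) ∈ U) →
      Attracts Φ A B := by
    intro B tm hB V hV hAV
    obtain ⟨T', hT'⟩ := hAtt V hV hAV
    refine ⟨T' + tm, fun t ht b hb => ?_⟩
    obtain ⟨t₀, ht₀, hbU⟩ := hB b hb
    have h1 : t₀ ≤ t := ht₀.trans (le_of_lt (lt_of_le_of_lt le_add_self ht))
    have h2 : T' < t - t₀ := lt_tsub_iff_right.mpr (lt_of_le_of_lt (add_le_add le_rfl ht₀) ht)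
    have heq : Φ (t, b) = Φ (t - t₀, Φ (t₀, b)) := by
      rw [← hadd, tsub_add_cancel_of_le h1]
    rw [heq]
    exact hT' _ h2 _ hbU
  constructor
  · rw [isOpen_iff_forall_mem_open]
    intro x hx
    obtain ⟨t₀, W, hWopen, hxW, hW⟩ := key x hx
    refine ⟨W, fun w hw => ?_, hWopen, hxW⟩
    exact enter {w} t₀ (fun b hb => ⟨t₀, le_refl _, by rw [hb]; exact hW w hw⟩)
  · intro B hB hBc
    choose! t₀ W hWopen hxW hW using key
    obtain ⟨s, hs⟩ := hBc.elim_finite_subcover (fun x : X => if x ∈ attractionRegion Φ A then W x else ∅)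
      (fun x => by show IsOpen (if x ∈ attractionRegion Φ A then W x else ∅); split
                   · exact hWopen x ‹_›
                   · exact isOpen_empty)
      (fun b hb => Set.mem_iUnion.mpr ⟨b, by simp [hB hb, hxW b (hB hb)]⟩)
    refine enter B (s.sup t₀) (fun b hb => ?_)
    obtain ⟨i, hi, hbW⟩ := Set.mem_iUnion₂.mp (hs hb)
    by_cases hia : i ∈ attractionRegion Φ A
    · simp only [hia, if_true] at hbW
      exact ⟨t₀ i, Finset.le_sup hi, hW i hia b hbW⟩
    · simp [hia] at hbW
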